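/- Let F : ℝⁿ → ℝᵐ be differentiable with Jacobian J, and suppose ‖J(y) − J(z)‖ ≤ κ_lj‖y − z‖, ‖J(y)‖ ≤ κ_lf and ‖F(y)‖ ≤ κ_bf for all y, z ∈ ℝⁿ. Let η₀ ∈ (0,1), x ∈ ℝⁿ, θ > 0, and let J_m ∈ ℝ^{m×n} satisfy ‖J_m‖ ≤ κ_bmj, ‖J_m − J(x)‖ ≤ κ_ej/θ and J_mᵀF(x) ≠ 0. Let d be the LM step for (J_m, F(x), λ) with λ = θ‖J_mᵀF(x)‖, and define ρ = (‖F(x)‖² − ‖F(x + d)‖²)/(‖F(x)‖² − ‖F(x) + J_m d‖²). If θ ≥ (κ_lj κ_bf + κ_lf² + 2κ_bf κ_ej + κ_bmj²)/((1 − η₀)‖J_mᵀF(x)‖), then ρ ≥ η₀. -/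

import Mathlib

open Filter Matrix MeasureTheory

/-- The map `x ↦ A x` from `ℝⁿ` to `ℝᵖ` with the Euclidean (`ℓ²`) structure. -/
noncomputable def mulVecE {p n : ℕ} (A : Matrix (Fin p) (Fin n) ℝ)
    (x : EuclideanSpace ℝ (Fin n)) : EuclideanSpace ℝ (Fin p) :=
  (WithLp.equiv 2 (Fin p → ℝ)).symm (A.mulVec ((WithLp.equiv 2 (Fin n → ℝ)) x))

/-- The spectral norm (ℓ²-operator norm) of a matrix. -/
noncomputable def opNorm {p n : ℕ} (A : Matrix (Fin p) (Fin n) ℝ) : ℝ :=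
  sSup {r : ℝ | ∃ x : EuclideanSpace ℝ (Fin n), ‖x‖ ≤ 1 ∧ r = ‖mulVecE A x‖}

/-- A matrix as a continuous linear map between Euclidean spaces. -/
noncomputable def jacCLM {p n : ℕ} (A : Matrix (Fin p) (Fin n) ℝ) :
    EuclideanSpace ℝ (Fin n) →L[ℝ] EuclideanSpace ℝ (Fin p) :=
  LinearMap.toContinuousLinearMap (Matrix.toEuclideanLin A)


open Metric

lemma mulVecE_eq {p n : ℕ} (A : Matrix (Fin p) (Fin n) ℝ) (x : EuclideanSpace ℝ (Fin n)) :
    mulVecE A x = jacCLM A x := rfl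

lemma opNorm_eq {p n : ℕ} (A : Matrix (Fin p) (Fin n) ℝ) : opNorm A = ‖jacCLM A‖ := by
  rw [← (jacCLM A).sSup_unitClosedBall_eq_norm]
  have hset : {r : ℝ | ∃ x : EuclideanSpace ℝ (Fin n), ‖x‖ ≤ 1 ∧ r = ‖mulVecE A x‖} =
      (fun x => ‖jacCLM A x‖) '' closedBall 0 1 := by
    ext r
    simp only [Set.mem_setOf_eq, Set.mem_image, mem_closedBall, dist_zero_right, mulVecE_eq]
    constructor
    · rintro ⟨y, hy, rfl⟩; exact ⟨y, hy, rfl⟩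
    · rintro ⟨y, hy, rfl⟩; exact ⟨y, hy, rfl⟩
  rw [opNorm, hset]

lemma mulVecE_le {p n : ℕ} (A : Matrix (Fin p) (Fin n) ℝ) (x : EuclideanSpace ℝ (Fin n)) :
    ‖mulVecE A x‖ ≤ opNorm A * ‖x‖ := by
  rw [opNorm_eq, mulVecE_eq]; exact (jacCLM A).le_opNorm x

lemma inner_mulVecE_transpose {p n : ℕ} (A : Matrix (Fin p) (Fin n) ℝ)
    (u : EuclideanSpace ℝ (Fin p)) (v : EuclideanSpace ℝ (Fin n)) :
    inner ℝ (mulVecE Aᵀ u) v = (inner ℝ u (mulVecE A v) : ℝ) := by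
  simp only [PiLp.inner_apply, RCLike.inner_apply, conj_trivial, mulVecE]
  have h : (Aᵀ.mulVec u) ⬝ᵥ (WithLp.equiv 2 (Fin n → ℝ) v) =
      u ⬝ᵥ (A.mulVec (WithLp.equiv 2 (Fin n → ℝ) v)) := by
    rw [Matrix.dotProduct_mulVec, Matrix.mulVec_transpose]
  simpa [dotProduct, mul_comm] using h

lemma jacCLM_sub {p n : ℕ} (A B : Matrix (Fin p) (Fin n) ℝ) :
    jacCLM (A - B) = jacCLM A - jacCLM B := by
  unfold jacCLM; rw [map_sub, map_sub]

lemma opNorm_nonneg {p n : ℕ} (A : Matrix (Fin p) (Fin n) ℝ) : 0 ≤ opNorm A := by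
  rw [opNorm_eq]; exact norm_nonneg _

lemma opNorm_sub_comm {p n : ℕ} (A B : Matrix (Fin p) (Fin n) ℝ) :
    opNorm (A - B) = opNorm (B - A) := by
  rw [opNorm_eq, opNorm_eq, jacCLM_sub, jacCLM_sub, ← norm_neg, neg_sub]

lemma mulVecE_transpose_le {p n : ℕ} (A : Matrix (Fin p) (Fin n) ℝ)
    (u : EuclideanSpace ℝ (Fin p)) : ‖mulVecE Aᵀ u‖ ≤ opNorm A * ‖u‖ := by
  set t := ‖mulVecE Aᵀ u‖ with ht
  have ht0 : 0 ≤ t := norm_nonneg _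
  have h2 : t ^ 2 ≤ (opNorm A * ‖u‖) * t := by
    calc t ^ 2 = inner ℝ (mulVecE Aᵀ u) (mulVecE Aᵀ u) := (real_inner_self_eq_norm_sq _).symm
    _ = inner ℝ u (mulVecE A (mulVecE Aᵀ u)) := inner_mulVecE_transpose A u _
    _ ≤ ‖u‖ * ‖mulVecE A (mulVecE Aᵀ u)‖ := real_inner_le_norm _ _
    _ ≤ ‖u‖ * (opNorm A * t) := by
        exact mul_le_mul_of_nonneg_left (mulVecE_le A _) (norm_nonneg u)
    _ = (opNorm A * ‖u‖) * t := by ring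
  nlinarith [h2, mul_nonneg (opNorm_nonneg A) (norm_nonneg u), ht0]


set_option maxHeartbeats 1000000 in
/-- If the Jacobian model is first-order accurate and `θ` is large enough,
then the iteration is successful: `ρ ≥ η₀`. -/
theorem large_theta_successful {n m : ℕ}
    (F : EuclideanSpace ℝ (Fin n) → EuclideanSpace ℝ (Fin m))
    (J : EuclideanSpace ℝ (Fin n) → Matrix (Fin m) (Fin n) ℝ)
    (hF : ∀ z, HasFDerivAt F (jacCLM (J z)) z)
    (κlj κlf κbf : ℝ)
    (hJlip : ∀ y z, opNorm (J y - J z) ≤ κlj * ‖y - z‖)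
    (hJb : ∀ y, opNorm (J y) ≤ κlf)
    (hFb : ∀ y, ‖F y‖ ≤ κbf)
    (η₀ : ℝ) (hη₀ : η₀ ∈ Set.Ioo (0 : ℝ) 1)
    (x : EuclideanSpace ℝ (Fin n)) (θ : ℝ) (hθ : 0 < θ)
    (Jm : Matrix (Fin m) (Fin n) ℝ) (κbmj κej : ℝ)
    (hJmb : opNorm Jm ≤ κbmj)
    (hJmacc : opNorm (Jm - J x) ≤ κej / θ)
    (hJmF : mulVecE Jmᵀ (F x) ≠ 0)
    (d : EuclideanSpace ℝ (Fin n))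
    (hd : (Jmᵀ * Jm + (θ * ‖mulVecE Jmᵀ (F x)‖) •
        (1 : Matrix (Fin n) (Fin n) ℝ)).mulVec d = -(Jmᵀ.mulVec (F x)))
    (ρ : ℝ)
    (hρ : ρ = (‖F x‖ ^ 2 - ‖F (x + d)‖ ^ 2) /
      (‖F x‖ ^ 2 - ‖F x + mulVecE Jm d‖ ^ 2))
    (hθbig : θ ≥ (κlj * κbf + κlf ^ 2 + 2 * κbf * κej + κbmj ^ 2) /
      ((1 - η₀) * ‖mulVecE Jmᵀ (F x)‖)) :
    ρ ≥ η₀ := by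
  obtain ⟨hη₀0, hη₀1⟩ := hη₀
  set g : EuclideanSpace ℝ (Fin n) := mulVecE Jmᵀ (F x) with hg
  set lam : ℝ := θ * ‖g‖ with hlam
  set u : EuclideanSpace ℝ (Fin m) := mulVecE Jm d with hu
  have hG : (0:ℝ) < ‖g‖ := norm_pos_iff.mpr hJmF
  have hlam0 : 0 < lam := mul_pos hθ hG
  -- the LM equation in Euclidean form
  have h1 : (Jmᵀ * Jm + lam • (1 : Matrix (Fin n) (Fin n) ℝ)) *ᵥ d
      = Jmᵀ *ᵥ (Jm *ᵥ d) + lam • (WithLp.equiv 2 (Fin n → ℝ) d) := by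
    rw [Matrix.add_mulVec, ← Matrix.mulVec_mulVec, Matrix.smul_mulVec,
      Matrix.one_mulVec]
    rfl
  have hd2 : Jmᵀ *ᵥ (Jm *ᵥ d) + lam • (WithLp.equiv 2 (Fin n → ℝ) d) = -(Jmᵀ *ᵥ (F x)) := h1 ▸ hd
  have hd' : mulVecE Jmᵀ u + lam • d = -g := (WithLp.equiv 2 (Fin n → ℝ)).injective hd2
  -- d ≠ 0
  have hdne : d ≠ 0 := by
    intro h
    apply hJmF
    have h2 := hd'
    rw [h] at h2
    have hu0 : u = 0 := by
      rw [hu, h, mulVecE_eq, map_zero]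
    rw [hu0, mulVecE_eq, map_zero, smul_zero, add_zero] at h2
    simpa [hg] using (neg_eq_zero.mp h2.symm)
  have hdpos : (0:ℝ) < ‖d‖ := norm_pos_iff.mpr hdne
  -- inner product identities
  have hBu : (inner ℝ (mulVecE Jmᵀ u) d : ℝ) = ‖u‖ ^ 2 := by
    rw [inner_mulVecE_transpose, ← hu, real_inner_self_eq_norm_sq]
  have hgd : (inner ℝ g d : ℝ) = inner ℝ (F x) u := by
    rw [hg, hu]; exact inner_mulVecE_transpose Jm (F x) d
  have hkey : ‖u‖ ^ 2 + lam * ‖d‖ ^ 2 = -(inner ℝ (F x) u : ℝ) := by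
    have h2 := congrArg (fun v : EuclideanSpace ℝ (Fin n) => (inner ℝ v d : ℝ)) hd'
    simp only [inner_add_left, real_inner_smul_left, inner_neg_left] at h2
    rw [hBu, real_inner_self_eq_norm_sq, hgd] at h2
    linarith [h2]
  clear_value g lam u
  -- predicted reduction
  have hpred : ‖F x‖ ^ 2 - ‖F x + u‖ ^ 2 = ‖u‖ ^ 2 + 2 * (lam * ‖d‖ ^ 2) := by
    have := norm_add_sq_real (F x) u
    linarith [hkey, this]
  have hpredpos : (0:ℝ) < ‖F x‖ ^ 2 - ‖F x + u‖ ^ 2 := by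
    rw [hpred]
    linarith [sq_nonneg ‖u‖, mul_pos hlam0 (pow_pos hdpos 2)]
  -- norm bounds
  have hκbmj0 : 0 ≤ κbmj := le_trans (opNorm_nonneg Jm) hJmb
  have hκbf0 : 0 ≤ κbf := (norm_nonneg (F x)).trans (hFb x)
  have hκlf0 : 0 ≤ κlf := (opNorm_nonneg (J x)).trans (hJb x)
  have hκej0 : 0 ≤ κej := by
    have h := (opNorm_nonneg (Jm - J x)).trans hJmacc
    have h2 := mul_nonneg h hθ.le
    rwa [div_mul_cancel₀ _ (ne_of_gt hθ)] at h2
  have hκlj0 : 0 ≤ κlj := by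
    have h := (opNorm_nonneg (J x - J (x + d))).trans (hJlip x (x + d))
    have hnx : ‖x - (x + d)‖ = ‖d‖ := by
      rw [show x - (x + d) = -d by abel, norm_neg]
    rw [hnx] at h
    exact le_of_not_gt fun hc => absurd h (not_le.mpr (mul_neg_of_neg_of_pos hc hdpos))
  have hund : ‖u‖ ≤ κbmj * ‖d‖ := by
    rw [hu]
    exact le_trans (mulVecE_le Jm d) (mul_le_mul_of_nonneg_right hJmb (norm_nonneg d))
  have hGle : ‖g‖ ≤ (κbmj ^ 2 + lam) * ‖d‖ := by
    calc ‖g‖ = ‖mulVecE Jmᵀ u + lam • d‖ := by rw [hd', norm_neg]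
    _ ≤ ‖mulVecE Jmᵀ u‖ + ‖lam • d‖ := norm_add_le _ _
    _ ≤ κbmj * ‖u‖ + lam * ‖d‖ := by
        refine add_le_add (le_trans (mulVecE_transpose_le Jm u)
          (mul_le_mul_of_nonneg_right hJmb (norm_nonneg u))) ?_
        rw [norm_smul, Real.norm_eq_abs, abs_of_pos hlam0]
    _ ≤ κbmj * (κbmj * ‖d‖) + lam * ‖d‖ :=
        add_le_add_left (mul_le_mul_of_nonneg_left hund hκbmj0) _
    _ = (κbmj ^ 2 + lam) * ‖d‖ := by ring
  -- theta is large
  have hθC : κlj * κbf + κlf ^ 2 + 2 * κbf * κej + κbmj ^ 2 ≤ (1 - η₀) * lam := by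
    have h1η : (0:ℝ) < (1 - η₀) * ‖g‖ := mul_pos (by linarith) hG
    have h2 := (div_le_iff₀ h1η).mp hθbig
    have h3 : (1 - η₀) * lam = θ * ((1 - η₀) * ‖g‖) := by rw [hlam]; ring
    linarith [h2, h3.le, h3.ge]
  have hbmj2 : κbmj ^ 2 ≤ lam := by
    linarith [hθC, mul_nonneg hκlj0 hκbf0, sq_nonneg κlf,
      mul_nonneg (mul_nonneg (by norm_num : (0:ℝ) ≤ 2) hκbf0) hκej0,
      mul_pos hη₀0 hlam0]
  have ht2 : 1 ≤ 2 * θ * ‖d‖ := by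
    have h3 : ‖g‖ ≤ 2 * lam * ‖d‖ := by
      refine hGle.trans ?_
      have : κbmj ^ 2 + lam ≤ 2 * lam := by linarith
      linarith [mul_le_mul_of_nonneg_right this (norm_nonneg d)]
    have h4 : ‖g‖ * 1 ≤ ‖g‖ * (2 * θ * ‖d‖) := by
      rw [hlam] at h3; linarith [h3]
    exact le_of_mul_le_mul_left h4 hG
  have hinvθ : 1 / θ ≤ 2 * ‖d‖ := by
    rw [div_le_iff₀ hθ]; linarith [ht2]
  -- mean value bounds
  have hxs : x ∈ closedBall x ‖d‖ := mem_closedBall_self (norm_nonneg d)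
  have hys : x + d ∈ closedBall x ‖d‖ := by
    rw [mem_closedBall, dist_eq_norm, add_sub_cancel_left]
  have hlip1 : ‖F (x + d) - F x - jacCLM (J x) d‖ ≤ κlj * ‖d‖ * ‖d‖ := by
    have hb : ∀ z ∈ closedBall x ‖d‖, ‖jacCLM (J z) - jacCLM (J x)‖ ≤ κlj * ‖d‖ := by
      intro z hz
      rw [← jacCLM_sub, ← opNorm_eq]
      refine (hJlip z x).trans ?_
      exact mul_le_mul_of_nonneg_left
        (by rwa [mem_closedBall, dist_eq_norm] at hz) hκlj0
    have h := (convex_closedBall x ‖d‖).norm_image_sub_le_of_norm_hasFDerivWithin_le'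
      (fun z _ => (hF z).hasFDerivWithinAt) hb hxs hys
    simpa [add_sub_cancel_left] using h
  have hlip0 : ‖F (x + d) - F x‖ ≤ κlf * ‖d‖ := by
    have h := (convex_closedBall x ‖d‖).norm_image_sub_le_of_norm_hasFDerivWithin_le
      (fun z _ => (hF z).hasFDerivWithinAt)
      (fun z _ => by rw [← opNorm_eq]; exact hJb z) hxs hys
    simpa [add_sub_cancel_left] using h
  have herr2 : ‖jacCLM (J x) d - u‖ ≤ κej / θ * ‖d‖ := by
    have heq : jacCLM (J x) d - u = mulVecE (J x - Jm) d := by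
      rw [hu, mulVecE_eq, mulVecE_eq, jacCLM_sub]; rfl
    rw [heq]
    refine (mulVecE_le _ _).trans ?_
    exact mul_le_mul_of_nonneg_right
      (by rw [opNorm_sub_comm]; exact hJmacc) (norm_nonneg d)
  have herr : ‖F (x + d) - F x - u‖ ≤ κlj * ‖d‖ ^ 2 + κej / θ * ‖d‖ := by
    have heq : F (x + d) - F x - u
        = (F (x + d) - F x - jacCLM (J x) d) + (jacCLM (J x) d - u) := by abel
    rw [heq]
    calc ‖(F (x + d) - F x - jacCLM (J x) d) + (jacCLM (J x) d - u)‖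
        ≤ ‖F (x + d) - F x - jacCLM (J x) d‖ + ‖jacCLM (J x) d - u‖ := norm_add_le _ _
    _ ≤ κlj * ‖d‖ * ‖d‖ + κej / θ * ‖d‖ := add_le_add hlip1 herr2
    _ = κlj * ‖d‖ ^ 2 + κej / θ * ‖d‖ := by ring
  -- bound on the difference between actual and model values
  have hdiff : ‖F (x + d)‖ ^ 2 - ‖F x + u‖ ^ 2
      ≤ 2 * κbf * (κlj * ‖d‖ ^ 2 + κej / θ * ‖d‖) + (κlf * ‖d‖) ^ 2 := by
    have hfd : ‖F (x + d)‖ ^ 2 = ‖F x‖ ^ 2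
        + 2 * (inner ℝ (F x) (F (x + d) - F x) : ℝ) + ‖F (x + d) - F x‖ ^ 2 := by
      have h := norm_add_sq_real (F x) (F (x + d) - F x)
      rw [add_sub_cancel] at h
      linarith [h]
    have hfu : ‖F x + u‖ ^ 2 = ‖F x‖ ^ 2 + 2 * (inner ℝ (F x) u : ℝ) + ‖u‖ ^ 2 :=
      norm_add_sq_real _ _
    have hinner : (inner ℝ (F x) (F (x + d) - F x) : ℝ) - inner ℝ (F x) u
        = inner ℝ (F x) (F (x + d) - F x - u) := by rw [← inner_sub_right]
    have h1 : (inner ℝ (F x) (F (x + d) - F x - u) : ℝ)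
        ≤ κbf * (κlj * ‖d‖ ^ 2 + κej / θ * ‖d‖) := by
      refine (real_inner_le_norm _ _).trans ?_
      exact mul_le_mul (hFb x) herr (norm_nonneg _) hκbf0
    have h2 : ‖F (x + d) - F x‖ ^ 2 ≤ (κlf * ‖d‖) ^ 2 :=
      pow_le_pow_left₀ (norm_nonneg _) hlip0 2
    linarith [h1, h2, sq_nonneg ‖u‖, hfd, hfu, hinner]
  -- key inequality : diff ≤ (1-η₀) * pred
  have hB : κej / θ * ‖d‖ ≤ 2 * κej * ‖d‖ ^ 2 := by
    have f1 : κej * (1 / θ) ≤ κej * (2 * ‖d‖) := mul_le_mul_of_nonneg_left hinvθ hκej0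
    have f2 := mul_le_mul_of_nonneg_right f1 (norm_nonneg d)
    calc κej / θ * ‖d‖ = κej * (1 / θ) * ‖d‖ := by ring
    _ ≤ κej * (2 * ‖d‖) * ‖d‖ := f2
    _ = 2 * κej * ‖d‖ ^ 2 := by ring
  have hdiff' : ‖F (x + d)‖ ^ 2 - ‖F x + u‖ ^ 2
      ≤ (1 - η₀) * (‖F x‖ ^ 2 - ‖F x + u‖ ^ 2) := by
    rw [hpred]
    have f : 2 * κbf * (κej / θ * ‖d‖) ≤ 2 * κbf * (2 * κej * ‖d‖ ^ 2) :=
      mul_le_mul_of_nonneg_left hB (by linarith : (0:ℝ) ≤ 2 * κbf)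
    have e2 := mul_le_mul_of_nonneg_right hθC (sq_nonneg ‖d‖)
    have n1 := mul_nonneg (mul_nonneg hκlj0 hκbf0) (sq_nonneg ‖d‖)
    have n2 := mul_nonneg (sq_nonneg κlf) (sq_nonneg ‖d‖)
    have n3 := mul_nonneg (sq_nonneg κbmj) (sq_nonneg ‖d‖)
    have n4 := mul_nonneg (by linarith : (0:ℝ) ≤ 1 - η₀) (sq_nonneg ‖u‖)
    linarith [hdiff, f, e2, n1, n2, n3, n4]
  -- conclude
  rw [hρ, ge_iff_le, le_div_iff₀ hpredpos]
  linarith [hdiff']
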